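/- Let a,b ∈ ℝ^d with 0 < ε < 1/9, and let P be a polygonal ab-path of total length at most (1+ε)‖ab‖. Let N(a,b) be the closed annulus of points x with (1+ε)/2·‖ab‖ ≤ ‖x−a‖ ≤ ‖ab‖. Then the total length of the portion of P inside N(a,b) is at least (1−ε)/2 · ‖ab‖, and the total length of P outside N(a,b) is at most (1+3ε)/2 · ‖ab‖. -/

import Mathlib

/-- Total length of a polygonal path (sum of distances between consecutive
vertices). -/
noncomputable def pathWeight {X : Type*} [MetricSpace X] : List X → ℝ
  | [] => 0
  | [_] => 0
  | a :: b :: rest => dist a b + pathWeight (b :: rest)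

/-- Length of the portion of the segment `[u,v]` lying in the set `A`. -/
noncomputable def segLenIn {d : ℕ} (A : Set (EuclideanSpace ℝ (Fin d)))
    (u v : EuclideanSpace ℝ (Fin d)) : ℝ :=
  dist u v *
    (MeasureTheory.volume
      {t : ℝ | t ∈ Set.Icc (0 : ℝ) 1 ∧ ((1 - t) • u + t • v) ∈ A}).toReal

lemma segLenIn_nonneg {d : ℕ} (A : Set (EuclideanSpace ℝ (Fin d)))
    (u v : EuclideanSpace ℝ (Fin d)) : 0 ≤ segLenIn A u v :=
  mul_nonneg dist_nonneg ENNReal.toReal_nonneg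

/-- telescoping triangle inequality along a path -/
lemma tele_abs {X : Type*} (φ : X → ℝ) :
    ∀ (x : X) (l : List X),
      |φ ((x :: l).getLast (List.cons_ne_nil _ _)) - φ x| ≤
        (((x :: l).zip l).map (fun q => |φ q.2 - φ q.1|)).sum := by
  intro x l
  induction l generalizing x with
  | nil => simp
  | cons y l ih =>
    have h := ih y
    have hgl : ((x :: y :: l).getLast (List.cons_ne_nil _ _)) =
        ((y :: l).getLast (List.cons_ne_nil _ _)) := by
      simp [List.getLast_cons]
    rw [hgl]
    simp only [List.zip_cons_cons, List.map_cons, List.sum_cons]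
    calc |φ ((y :: l).getLast (List.cons_ne_nil _ _)) - φ x|
        ≤ |φ ((y :: l).getLast (List.cons_ne_nil _ _)) - φ y| + |φ y - φ x| :=
          abs_sub_le _ _ _
      _ ≤ (((y :: l).zip l).map (fun q => |φ q.2 - φ q.1|)).sum + |φ y - φ x| := by
          linarith
      _ = |φ y - φ x| + (((y :: l).zip l).map (fun q => |φ q.2 - φ q.1|)).sum := by ring

/-- key per-segment bound -/
lemma seg_key {d : ℕ} (a : EuclideanSpace ℝ (Fin d)) (r₁ r₂ : ℝ) (hr : r₁ ≤ r₂)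
    (u v : EuclideanSpace ℝ (Fin d)) :
    |max r₁ (min (dist v a) r₂) - max r₁ (min (dist u a) r₂)| ≤
      segLenIn {x | r₁ ≤ dist x a ∧ dist x a ≤ r₂} u v := by
  set F : ℝ → ℝ := fun t => dist ((1 - t) • u + t • v) a with hF
  set S : Set ℝ := {t : ℝ | t ∈ Set.Icc (0 : ℝ) 1 ∧
      ((1 - t) • u + t • v) ∈ {x : EuclideanSpace ℝ (Fin d) | r₁ ≤ dist x a ∧ dist x a ≤ r₂}}
    with hSdef
  set g : ℝ → ℝ := fun x => max r₁ (min x r₂) with hg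
  have hgmono : Monotone g := fun x y hxy =>
    max_le_max le_rfl (min_le_min hxy le_rfl)
  have hF0 : F 0 = dist u a := by simp [hF]
  have hF1 : F 1 = dist v a := by simp [hF]
  set lo : ℝ := min (F 0) (F 1) with hlo
  set hi : ℝ := max (F 0) (F 1) with hhi
  have habs : |g (F 1) - g (F 0)| = g hi - g lo := by
    rw [← max_sub_min_eq_abs, hhi, hlo, hgmono.map_max, hgmono.map_min, max_comm, min_comm]
  rw [← hF0, ← hF1, habs]
  rcases le_or_gt (g hi) (g lo) with hcase | hcase
  · have : g hi - g lo ≤ 0 := by linarith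
    exact this.trans (segLenIn_nonneg _ _ _)
  -- continuity and Lipschitz of F
  · have hFcont : Continuous F := by
      apply Continuous.dist _ continuous_const
      exact ((continuous_const.sub continuous_id).smul continuous_const).add
        (continuous_id.smul continuous_const)
    have hFlip : LipschitzWith (nndist u v) F := by
      apply LipschitzWith.of_dist_le_mul
      intro s t
      have hst : dist ((1 - s) • u + s • v) ((1 - t) • u + t • v) = dist s t * dist u v := by
        rw [dist_eq_norm, dist_eq_norm, dist_eq_norm]
        have : ((1 - s) • u + s • v) - ((1 - t) • u + t • v) = (s - t) • (v - u) := by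
          module
        rw [this, norm_smul, Real.norm_eq_abs, norm_sub_rev]
      calc dist (F s) (F t) ≤ dist ((1 - s) • u + s • v) ((1 - t) • u + t • v) :=
            abs_dist_sub_le _ _ _
        _ = (nndist u v : ℝ) * dist s t := by rw [hst, coe_nndist]; ring
    -- the interval [g lo, g hi] is contained in F '' S
    have hsub : Set.Icc (g lo) (g hi) ⊆ F '' S := by
      intro s hs
      have hr1 : r₁ ≤ s := le_trans (le_max_left _ _) hs.1
      have hr2 : s ≤ r₂ := hs.2.trans (max_le hr (min_le_right _ _))
      have hlos : lo ≤ s := by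
        rcases le_or_gt lo r₂ with h | h
        · have : min lo r₂ = lo := min_eq_left h
          have := le_max_right r₁ (min lo r₂)
          calc lo = min lo r₂ := (min_eq_left h).symm
            _ ≤ g lo := le_max_right _ _
            _ ≤ s := hs.1
        · exfalso
          have hhi' : r₂ < hi := h.trans_le (min_le_max)
          have h1 : g lo = r₂ := by
            simp only [hg]
            rw [min_eq_right h.le, max_eq_right hr]
          have h2 : g hi = r₂ := by
            simp only [hg]
            rw [min_eq_right hhi'.le, max_eq_right hr]
          rw [h1, h2] at hcase; exact lt_irrefl _ hcase
      have hshi : s ≤ hi := by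
        rcases le_or_gt r₁ hi with h | h
        · have : g hi ≤ hi := max_le h (min_le_left _ _)
          exact hs.2.trans this
        · exfalso
          have hlo' : lo < r₁ := (min_le_max).trans_lt h
          have h1 : g lo = r₁ := by
            simp only [hg]
            rw [max_eq_left]
            exact (min_le_left _ _).trans hlo'.le
          have h2 : g hi = r₁ := by
            simp only [hg]
            rw [max_eq_left]
            exact (min_le_left _ _).trans h.le
          rw [h1, h2] at hcase; exact lt_irrefl _ hcase
      have hmem : s ∈ Set.uIcc (F 0) (F 1) := by
        have : Set.uIcc (F 0) (F 1) = Set.Icc lo hi := rfl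
        rw [this]
        exact ⟨hlos, hshi⟩
      have := intermediate_value_uIcc (hFcont.continuousOn (s := Set.uIcc (0:ℝ) 1)) hmem
      obtain ⟨t, ht, hts⟩ := this
      rw [Set.uIcc_of_le (zero_le_one' ℝ)] at ht
      refine ⟨t, ⟨ht, ?_, ?_⟩, hts⟩
      · rw [show dist ((1 - t) • u + t • v) a = F t from rfl, hts]; exact hr1
      · rw [show dist ((1 - t) • u + t • v) a = F t from rfl, hts]; exact hr2
    -- measure computation
    have h1 : ENNReal.ofReal (g hi - g lo) ≤ MeasureTheory.volume (F '' S) := by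
      rw [← Real.volume_Icc]
      exact MeasureTheory.measure_mono hsub
    have h2 : MeasureTheory.volume (F '' S) ≤
        (nndist u v : ENNReal) * MeasureTheory.volume S := by
      have := (hFlip.lipschitzOnWith (s := S)).hausdorffMeasure_image_le
        (d := 1) zero_le_one
      rw [MeasureTheory.hausdorffMeasure_real] at this
      simpa using this
    have hS1 : MeasureTheory.volume S ≤ 1 := by
      have : S ⊆ Set.Icc (0:ℝ) 1 := fun t ht => ht.1
      calc MeasureTheory.volume S ≤ MeasureTheory.volume (Set.Icc (0:ℝ) 1) :=
            MeasureTheory.measure_mono this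
        _ = 1 := by simp [Real.volume_Icc]
    have hfin : (nndist u v : ENNReal) * MeasureTheory.volume S ≠ ⊤ :=
      ENNReal.mul_ne_top ENNReal.coe_ne_top (hS1.trans_lt ENNReal.one_lt_top).ne
    have h3 : g hi - g lo ≤ (dist u v) * (MeasureTheory.volume S).toReal := by
      have := ENNReal.toReal_mono hfin (h1.trans h2)
      rw [ENNReal.toReal_ofReal_eq_iff.mpr (le_of_lt (sub_pos.mpr hcase))] at this
      rwa [ENNReal.toReal_mul, ENNReal.coe_toReal, coe_nndist] at this
    exact h3

/-- Let `0 < ε < 1/9` and let `P` be a polygonal `ab`-path of total length at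
most `(1+ε)‖ab‖`. Let `N(a,b)` be the annulus of points `x` with
`(1+ε)/2·‖ab‖ ≤ ‖x−a‖ ≤ ‖ab‖`. Then the length of the portion of `P` inside
`N(a,b)` is at least `(1−ε)/2·‖ab‖`, and the length of the portion outside is at
most `(1+3ε)/2·‖ab‖`. -/
theorem path_annulus_length {d : ℕ} (ε : ℝ) (hε0 : 0 < ε) (hε1 : ε < 1 / 9)
    (a b : EuclideanSpace ℝ (Fin d)) (p : List (EuclideanSpace ℝ (Fin d)))
    (hhead : p.head? = some a) (hlast : p.getLast? = some b)
    (hlen : pathWeight p ≤ (1 + ε) * dist a b) :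
    (1 - ε) / 2 * dist a b ≤
        ((p.zip p.tail).map (fun q =>
          segLenIn {x | (1 + ε) / 2 * dist a b ≤ dist x a ∧ dist x a ≤ dist a b}
            q.1 q.2)).sum ∧
      pathWeight p -
          ((p.zip p.tail).map (fun q =>
            segLenIn {x | (1 + ε) / 2 * dist a b ≤ dist x a ∧ dist x a ≤ dist a b}
              q.1 q.2)).sum ≤ (1 + 3 * ε) / 2 * dist a b := by
  set r₂ : ℝ := dist a b with hr₂
  set r₁ : ℝ := (1 + ε) / 2 * r₂ with hr₁
  have hD0 : (0:ℝ) ≤ r₂ := by rw [hr₂]; exact dist_nonneg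
  have hr : r₁ ≤ r₂ := by rw [hr₁]; nlinarith
  obtain ⟨l, rfl⟩ : ∃ l, p = a :: l := by
    cases p with
    | nil => simp at hhead
    | cons x l =>
      simp only [List.head?_cons, Option.some.injEq] at hhead
      exact ⟨l, by rw [hhead]⟩
  have hb : (a :: l).getLast (List.cons_ne_nil _ _) = b := by
    rw [List.getLast?_eq_getLast (List.cons_ne_nil _ _)] at hlast
    exact Option.some_inj.mp hlast
  set φ : EuclideanSpace ℝ (Fin d) → ℝ := fun x => max r₁ (min (dist x a) r₂) with hφ
  have hkey : ∀ q ∈ (a :: l).zip l, |φ q.2 - φ q.1| ≤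
      segLenIn {x | r₁ ≤ dist x a ∧ dist x a ≤ r₂} q.1 q.2 := by
    intro q _
    exact seg_key a r₁ r₂ hr q.1 q.2
  have hsum : (((a :: l).zip l).map (fun q => |φ q.2 - φ q.1|)).sum ≤
      (((a :: l).zip l).map (fun q =>
        segLenIn {x | r₁ ≤ dist x a ∧ dist x a ≤ r₂} q.1 q.2)).sum :=
    List.sum_le_sum hkey
  have htel := tele_abs φ a l
  have hφa : φ a = r₁ := by
    simp only [hφ, dist_self]
    rw [min_eq_left hD0, max_eq_left]
    rw [hr₁]; nlinarith
  have hφb : φ b = r₂ := by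
    simp only [hφ]
    rw [dist_comm b a, ← hr₂, min_self, max_eq_right hr]
  rw [hb, hφa, hφb] at htel
  have habs : |r₂ - r₁| = r₂ - r₁ := abs_of_nonneg (by linarith)
  rw [habs] at htel
  have hmain : r₂ - r₁ ≤ (((a :: l).zip l).map (fun q =>
      segLenIn {x | r₁ ≤ dist x a ∧ dist x a ≤ r₂} q.1 q.2)).sum :=
    htel.trans hsum
  have htail : (a :: l).tail = l := rfl
  rw [htail]
  constructor
  · calc (1 - ε) / 2 * r₂ = r₂ - r₁ := by rw [hr₁]; ring
      _ ≤ _ := hmain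
  · have h2 : r₂ - r₁ = (1 - ε) / 2 * r₂ := by rw [hr₁]; ring
    rw [h2] at hmain
    linarith
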